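/- Let X and Y be locally compact Hausdorff spaces and let T : C₀(X,ℂ) → C₀(Y,ℂ) be a surjective linear isometry. Then there exist a homeomorphism φ : Y → X and a continuous function h : Y → ℂ with |h(y)| = 1 for all y ∈ Y such that (Tf)(y) = h(y) · f(φ(y)) for all f ∈ C₀(X,ℂ) and all y ∈ Y. -/

import Mathlib

open ZeroAtInfty Set Filter

set_option linter.unusedSectionVars false

namespace BSAux

variable {Z : Type*} [TopologicalSpace Z] [LocallyCompactSpace Z] [T2Space Z]

lemma norm_apply_le (f : C₀(Z, ℂ)) (z : Z) : ‖f z‖ ≤ ‖f‖ :=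
  f.toBCF.norm_coe_le_norm z

lemma norm_le_of_forall {f : C₀(Z, ℂ)} {C : ℝ} (h0 : 0 ≤ C) (h : ∀ z, ‖f z‖ ≤ C) :
    ‖f‖ ≤ C := by
  rw [← ZeroAtInftyContinuousMap.norm_toBCF_eq_norm]
  exact (BoundedContinuousFunction.norm_le h0).mpr h

/-- the complex `C₀` function associated to a compactly supported real function. -/
noncomputable def realToC0 (g : C(Z, ℝ)) (hg : HasCompactSupport g) : C₀(Z, ℂ) where
  toFun z := (g z : ℂ)
  continuous_toFun := Complex.continuous_ofReal.comp g.continuous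
  zero_at_infty' := by
    refine tendsto_const_nhds.congr' ?_
    filter_upwards [hg.compl_mem_cocompact] with z hz
    simp [image_eq_zero_of_notMem_tsupport hz]

@[simp] lemma realToC0_apply (g : C(Z, ℝ)) (hg : HasCompactSupport g) (z : Z) :
    realToC0 g hg z = (g z : ℂ) := rfl

/-- multiplication of a `C₀` function by a continuous `[0,1]`-valued function. -/
noncomputable def rsmul (g : C(Z, ℝ)) (hg : ∀ z, g z ∈ Icc (0:ℝ) 1) (f : C₀(Z, ℂ)) :
    C₀(Z, ℂ) where
  toFun z := (g z : ℂ) * f z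
  continuous_toFun := (Complex.continuous_ofReal.comp g.continuous).mul (map_continuous f)
  zero_at_infty' := by
    refine squeeze_zero_norm (fun z => ?_) (by simpa using (zero_at_infty f).norm)
    · rw [norm_mul, Complex.norm_real]
      calc |g z| * ‖f z‖ ≤ 1 * ‖f z‖ := by
            apply mul_le_mul_of_nonneg_right _ (norm_nonneg _)
            rw [abs_le]; exact ⟨by linarith [(hg z).1], (hg z).2⟩
        _ = ‖f z‖ := one_mul _

@[simp] lemma rsmul_apply (g : C(Z, ℝ)) (hg : ∀ z, g z ∈ Icc (0:ℝ) 1) (f : C₀(Z, ℂ)) (z : Z) :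
    rsmul g hg f z = (g z : ℂ) * f z := rfl

lemma norm_rsmul_le (g : C(Z, ℝ)) (hg : ∀ z, g z ∈ Icc (0:ℝ) 1) (f : C₀(Z, ℂ)) :
    ‖rsmul g hg f‖ ≤ ‖f‖ := by
  refine norm_le_of_forall (norm_nonneg _) fun z => ?_
  rw [rsmul_apply, norm_mul, Complex.norm_real]
  calc |g z| * ‖f z‖ ≤ 1 * ‖f‖ := by
        apply mul_le_mul _ (norm_apply_le f z) (norm_nonneg _) zero_le_one
        rw [abs_le]; exact ⟨by linarith [(hg z).1], (hg z).2⟩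
    _ = ‖f‖ := one_mul _

/-- Urysohn peak: `g = 1` on a neighborhood of `z`, supported in `V`, compactly supported. -/
lemma exists_peak {z : Z} {V : Set Z} (hV : IsOpen V) (hz : z ∈ V) :
    ∃ g : C(Z, ℝ), HasCompactSupport g ∧ (∀ w, g w ∈ Icc (0:ℝ) 1) ∧
      (∃ U, IsOpen U ∧ z ∈ U ∧ EqOn g 1 U) ∧ EqOn g 0 Vᶜ := by
  obtain ⟨K, hK, hzK, hKV⟩ := exists_compact_subset hV hz
  obtain ⟨g, hg1, hg0, hgc, hgi⟩ := exists_continuous_one_zero_of_isCompact hK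
    hV.isClosed_compl (disjoint_compl_right_iff_subset.mpr hKV)
  exact ⟨g, hgc, hgi, ⟨interior K, isOpen_interior, hzK, fun w hw => hg1 (interior_subset hw)⟩, hg0⟩




lemma norm_csmul (c : ℂ) (f : C₀(Z, ℂ)) : ‖c • f‖ = ‖c‖ * ‖f‖ :=
  norm_smul (α := ℂ) c f

/-- phase: for any complex number there is a unimodular θ with θ * w = ‖w‖. -/
lemma exists_phase (w : ℂ) : ∃ θ : ℂ, ‖θ‖ = 1 ∧ θ * w = (‖w‖ : ℂ) := by
  rcases eq_or_ne w 0 with rfl | hw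
  · exact ⟨1, by simp, by simp⟩
  · refine ⟨(‖w‖ : ℂ) / w, ?_, ?_⟩
    · rw [norm_div, Complex.norm_real, norm_norm, div_self (norm_ne_zero_iff.mpr hw)]
    · field_simp

section ExtFunc

variable (μ : C₀(Z, ℂ) → ℂ)

/-- the "extreme point" property of `μ` on the closed unit ball, in midpoint-free form. -/
def ExtProp : Prop :=
  ∀ (α β : C₀(Z, ℂ) → ℂ),
    (∀ f g, α (f + g) = α f + α g) → (∀ (c : ℂ) f, α (c • f) = c * α f) →
    (∀ f, ‖α f‖ ≤ ‖f‖) → (∀ f, ‖β f‖ ≤ ‖f‖) →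
    ∀ t : ℝ, 0 < t → t < 1 → (∀ f, μ f = t * α f + (1 - t) * β f) → ∀ f, α f = μ f

variable {μ}
variable (hadd : ∀ f g, μ (f + g) = μ f + μ g) (hsmul : ∀ (c : ℂ) f, μ (c • f) = c * μ f)
  (hbd : ∀ f, ‖μ f‖ ≤ ‖f‖) (hext : ExtProp μ)

include hadd hsmul in
lemma mu_zero : μ 0 = 0 := by
  have := hsmul 0 0; simpa using this

include hadd hsmul in
lemma mu_sub (f g : C₀(Z, ℂ)) : μ (f - g) = μ f - μ g := by
  have h1 : μ (f - g) + μ g = μ f := by rw [← hadd]; norm_num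
  linear_combination h1

include hadd hsmul hbd hext in
lemma exists_t (g : C(Z, ℝ)) (hg : ∀ z, g z ∈ Icc (0:ℝ) 1) :
    ∃ t : ℝ, 0 ≤ t ∧ t ≤ 1 ∧ ∀ f, μ (rsmul g hg f) = (t : ℂ) * μ f := by
  have hg' : ∀ z, (1 - g : C(Z, ℝ)) z ∈ Icc (0:ℝ) 1 := by
    intro z
    have := hg z
    simp only [ContinuousMap.sub_apply, ContinuousMap.one_apply, mem_Icc] at this ⊢
    constructor <;> linarith [this.1, this.2]
  set m : C₀(Z, ℂ) → C₀(Z, ℂ) := rsmul g hg with hm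
  set m' : C₀(Z, ℂ) → C₀(Z, ℂ) := rsmul (1 - g) hg' with hm'
  have hdecomp : ∀ f, m f + m' f = f := by
    intro f
    ext z
    simp only [ZeroAtInftyContinuousMap.coe_add, Pi.add_apply, hm, hm', rsmul_apply,
      ContinuousMap.sub_apply, ContinuousMap.one_apply]
    push_cast
    ring
  have hmadd : ∀ f₁ f₂, m (f₁ + f₂) = m f₁ + m f₂ := by
    intro f₁ f₂; ext z
    simp only [hm, rsmul_apply, ZeroAtInftyContinuousMap.coe_add, Pi.add_apply]
    ring
  have hmsmul : ∀ (c : ℂ) f, m (c • f) = c • m f := by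
    intro c f; ext z
    simp only [hm, rsmul_apply, ZeroAtInftyContinuousMap.coe_smul, Pi.smul_apply, smul_eq_mul]
    ring
  have hm'add : ∀ f₁ f₂, m' (f₁ + f₂) = m' f₁ + m' f₂ := by
    intro f₁ f₂; ext z
    simp only [hm', rsmul_apply, ZeroAtInftyContinuousMap.coe_add, Pi.add_apply]
    ring
  have hm'smul : ∀ (c : ℂ) f, m' (c • f) = c • m' f := by
    intro c f; ext z
    simp only [hm', rsmul_apply, ZeroAtInftyContinuousMap.coe_smul, Pi.smul_apply, smul_eq_mul]
    ring
  -- the star bound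
  have hstar : ∀ f₁ f₂, ‖f₁‖ ≤ 1 → ‖f₂‖ ≤ 1 → ‖μ (m f₁)‖ + ‖μ (m' f₂)‖ ≤ 1 := by
    intro f₁ f₂ h₁ h₂
    obtain ⟨θ₁, hθ₁, hθ₁'⟩ := exists_phase (μ (m f₁))
    obtain ⟨θ₂, hθ₂, hθ₂'⟩ := exists_phase (μ (m' f₂))
    set F : C₀(Z, ℂ) := m (θ₁ • f₁) + m' (θ₂ • f₂) with hF
    have hFnorm : ‖F‖ ≤ 1 := by
      refine norm_le_of_forall zero_le_one fun z => ?_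
      have e1 : F z = (g z : ℂ) * (θ₁ • f₁) z + ((1 - g : C(Z,ℝ)) z : ℂ) * (θ₂ • f₂) z := rfl
      rw [e1]
      have b1 : ‖(g z : ℂ) * (θ₁ • f₁) z‖ ≤ g z := by
        rw [norm_mul, Complex.norm_real, Real.norm_eq_abs, abs_of_nonneg (hg z).1]
        have : ‖(θ₁ • f₁) z‖ ≤ 1 := by
          simp only [ZeroAtInftyContinuousMap.coe_smul, Pi.smul_apply, smul_eq_mul, norm_mul, hθ₁,
            one_mul]
          exact le_trans (norm_apply_le f₁ z) h₁
        nlinarith [(hg z).1]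
      have b2 : ‖((1 - g : C(Z,ℝ)) z : ℂ) * (θ₂ • f₂) z‖ ≤ 1 - g z := by
        rw [norm_mul, Complex.norm_real, Real.norm_eq_abs, abs_of_nonneg (hg' z).1]
        have : ‖(θ₂ • f₂) z‖ ≤ 1 := by
          simp only [ZeroAtInftyContinuousMap.coe_smul, Pi.smul_apply, smul_eq_mul, norm_mul, hθ₂,
            one_mul]
          exact le_trans (norm_apply_le f₂ z) h₂
        have hz' := (hg' z)
        simp only [ContinuousMap.sub_apply, ContinuousMap.one_apply, mem_Icc] at hz'
        simp only [ContinuousMap.sub_apply, ContinuousMap.one_apply]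
        nlinarith [hz'.1]
      calc ‖_ + _‖ ≤ _ + _ := norm_add_le _ _
        _ ≤ g z + (1 - g z) := add_le_add b1 b2
        _ = 1 := by ring
    have hμF : μ F = (‖μ (m f₁)‖ : ℂ) + (‖μ (m' f₂)‖ : ℂ) := by
      rw [hF, hadd, hmsmul, hm'smul]
      have e1 : μ (θ₁ • m f₁) = θ₁ * μ (m f₁) := hsmul _ _
      have e2 : μ (θ₂ • m' f₂) = θ₂ * μ (m' f₂) := hsmul _ _
      rw [e1, e2, hθ₁', hθ₂']
    have := hbd F
    rw [hμF] at this
    have : ‖((‖μ (m f₁)‖ + ‖μ (m' f₂)‖ : ℝ) : ℂ)‖ ≤ 1 := by push_cast; simpa using le_trans this hFnorm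
    rw [Complex.norm_real, Real.norm_eq_abs, abs_of_nonneg (by positivity)] at this
    exact this
  -- the sup
  set S : Set ℝ := {r | ∃ f : C₀(Z, ℂ), ‖f‖ ≤ 1 ∧ r = ‖μ (m f)‖} with hS
  have hS0 : (0 : ℝ) ∈ S := by
    refine ⟨0, by simp, ?_⟩
    have : m 0 = 0 := by ext z; simp [hm]
    rw [this, mu_zero hadd hsmul, norm_zero]
  have hSbdd : ∀ r ∈ S, r ≤ 1 := by
    rintro r ⟨f, hf, rfl⟩
    have := hstar f 0 hf (by simp)
    have h0 : m' 0 = 0 := by ext z; simp [hm']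
    rw [h0, mu_zero hadd hsmul, norm_zero, add_zero] at this
    exact this
  set t : ℝ := sSup S with ht
  have htmem0 : 0 ≤ t := le_csSup ⟨1, fun r hr => hSbdd r hr⟩ hS0
  have htle1 : t ≤ 1 := csSup_le ⟨0, hS0⟩ hSbdd
  have hub : ∀ f, ‖f‖ ≤ 1 → ‖μ (m f)‖ ≤ t :=
    fun f hf => le_csSup ⟨1, fun r hr => hSbdd r hr⟩ ⟨f, hf, rfl⟩
  have hscaled : ∀ f, ‖μ (m f)‖ ≤ t * ‖f‖ := by
    intro f
    rcases eq_or_ne f 0 with rfl | hf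
    · have : m 0 = 0 := by ext z; simp [hm]
      rw [this, mu_zero hadd hsmul]; simp
    · have hfn : (0:ℝ) < ‖f‖ := norm_pos_iff.mpr hf
      have key : ‖μ (m (((‖f‖⁻¹ : ℝ) : ℂ) • f))‖ ≤ t := by
        apply hub
        rw [norm_csmul, Complex.norm_real, Real.norm_eq_abs, abs_of_nonneg (by positivity), inv_mul_cancel₀ hfn.ne']
      rw [hmsmul, hsmul, norm_mul, Complex.norm_real, Real.norm_eq_abs, abs_of_nonneg (by positivity)] at key
      calc ‖μ (m f)‖ = ‖f‖ * (‖f‖⁻¹ * ‖μ (m f)‖) := by field_simp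
        _ ≤ ‖f‖ * t := by apply mul_le_mul_of_nonneg_left _ hfn.le; linarith [key]
        _ = t * ‖f‖ := mul_comm _ _
  have hscaled' : ∀ f, ‖μ (m' f)‖ ≤ (1 - t) * ‖f‖ := by
    intro f
    rcases eq_or_ne f 0 with rfl | hf
    · have : m' 0 = 0 := by ext z; simp [hm']
      rw [this, mu_zero hadd hsmul]; simp
    · have hfn : (0:ℝ) < ‖f‖ := norm_pos_iff.mpr hf
      set f' : C₀(Z, ℂ) := ((‖f‖⁻¹ : ℝ) : ℂ) • f with hf'
      have hf'1 : ‖f'‖ ≤ 1 := by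
        rw [hf', norm_csmul, Complex.norm_real, Real.norm_eq_abs, abs_of_nonneg (by positivity),
          inv_mul_cancel₀ hfn.ne']
      have hkey : t ≤ 1 - ‖μ (m' f')‖ := by
        apply csSup_le ⟨0, hS0⟩
        rintro r ⟨f₁, hf₁, rfl⟩
        linarith [hstar f₁ f' hf₁ hf'1]
      have : ‖μ (m' f')‖ ≤ 1 - t := by linarith
      rw [hf', hm'smul, hsmul, norm_mul, Complex.norm_real, Real.norm_eq_abs,
        abs_of_nonneg (by positivity)] at this
      calc ‖μ (m' f)‖ = ‖f‖ * (‖f‖⁻¹ * ‖μ (m' f)‖) := by field_simp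
        _ ≤ ‖f‖ * (1 - t) := by apply mul_le_mul_of_nonneg_left _ hfn.le; linarith [this]
        _ = (1 - t) * ‖f‖ := mul_comm _ _
  clear_value t
  -- case split
  rcases le_or_gt t 0 with h0 | h0
  · refine ⟨0, le_refl _, zero_le_one, fun f => ?_⟩
    have := hscaled f
    have : ‖μ (m f)‖ ≤ 0 := le_trans this (by nlinarith [norm_nonneg f])
    simp [norm_le_zero_iff.mp this]
  rcases le_or_gt 1 t with h1 | h1
  · refine ⟨1, zero_le_one, le_refl _, fun f => ?_⟩
    have h1t : t = 1 := le_antisymm htle1 h1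
    have h2 := hscaled' f
    rw [h1t] at h2
    have hz : μ (m' f) = 0 := norm_le_zero_iff.mp (by simpa using h2)
    have := hadd (m f) (m' f)
    rw [hdecomp f] at this
    rw [hz, add_zero] at this
    rw [this]
    norm_num
  · -- 0 < t < 1
    set α : C₀(Z, ℂ) → ℂ := fun f => (t : ℂ)⁻¹ * μ (m f) with hα
    set β : C₀(Z, ℂ) → ℂ := fun f => ((1 - t : ℝ) : ℂ)⁻¹ * μ (m' f) with hβ
    have ht1 : (0:ℝ) < 1 - t := by linarith
    have htC : (t : ℂ) ≠ 0 := Complex.ofReal_ne_zero.mpr h0.ne'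
    have h1tC : ((1 - t : ℝ) : ℂ) ≠ 0 := Complex.ofReal_ne_zero.mpr ht1.ne'
    have hαf : ∀ f, α f = μ f := by
      apply hext α β
      · intro f₁ f₂; rw [hα]; simp only; rw [hmadd, hadd]; ring
      · intro c f; rw [hα]; simp only; rw [hmsmul, hsmul]; ring
      · intro f
        have hnorm : ‖α f‖ = t⁻¹ * ‖μ (m f)‖ := by
          rw [hα]; simp only [norm_mul, norm_inv, Complex.norm_real, Real.norm_eq_abs,
            abs_of_nonneg h0.le]
        rw [hnorm]
        calc t⁻¹ * ‖μ (m f)‖ ≤ t⁻¹ * (t * ‖f‖) :=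
              mul_le_mul_of_nonneg_left (hscaled f) (by positivity)
          _ = ‖f‖ := by field_simp
      · intro f
        have hnorm : ‖β f‖ = (1 - t)⁻¹ * ‖μ (m' f)‖ := by
          rw [hβ]; simp only [norm_mul, norm_inv, Complex.norm_real, Real.norm_eq_abs,
            abs_of_nonneg ht1.le]
        rw [hnorm]
        calc (1-t)⁻¹ * ‖μ (m' f)‖ ≤ (1-t)⁻¹ * ((1-t) * ‖f‖) :=
              mul_le_mul_of_nonneg_left (hscaled' f) (by positivity)
          _ = ‖f‖ := by field_simp
      · exact h0
      · exact h1
      · intro f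
        rw [hα, hβ]; simp only
        have hd := hadd (m f) (m' f)
        rw [hdecomp f] at hd
        have e1 : (t:ℂ) * ((t:ℂ)⁻¹ * μ (m f)) = μ (m f) := by
          rw [← mul_assoc, mul_inv_cancel₀ htC, one_mul]
        have e2 : ((1-t:ℝ):ℂ) * (((1-t:ℝ):ℂ)⁻¹ * μ (m' f)) = μ (m' f) := by
          rw [← mul_assoc, mul_inv_cancel₀ h1tC, one_mul]
        push_cast at e1 e2 ⊢
        rw [e1, e2]
        linear_combination hd
    refine ⟨t, h0.le, htle1, fun f => ?_⟩
    have hv := hαf f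
    rw [hα] at hv; simp only at hv
    field_simp at hv
    linear_combination hv
include hadd hsmul hbd hext in
lemma exists_point_repr (hex : ∃ f₀ : C₀(Z, ℂ), ‖f₀‖ ≤ 1 ∧ μ f₀ = 1) :
    ∃ (x : Z) (lam : ℂ), ‖lam‖ = 1 ∧ ∀ f, μ f = lam * f x := by
  classical
  obtain ⟨f₀, hf₀, hμf₀⟩ := hex
  set K : Set Z := {z | (1:ℝ)/2 ≤ ‖f₀ z‖} with hK
  have hKc : IsCompact K := by
    have h1 : {z | ‖f₀ z‖ < 1/2} ∈ cocompact Z := by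
      have h2 := (zero_at_infty f₀ : Tendsto f₀ (cocompact Z) (nhds 0))
      have h3 : ∀ᶠ z in cocompact Z, f₀ z ∈ Metric.ball (0:ℂ) (1/2) :=
        h2 (Metric.ball_mem_nhds 0 (by norm_num))
      show ∀ᶠ z in cocompact Z, ‖f₀ z‖ < 1/2
      simpa [Metric.mem_ball, dist_zero_right] using h3
    obtain ⟨C, hC, hsub⟩ := mem_cocompact.mp h1
    have hKC : K ⊆ C := by
      intro z hz
      by_contra h
      have := hsub h
      simp only [hK, mem_setOf_eq] at hz
      simp only [mem_setOf_eq] at this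
      linarith
    exact hC.of_isClosed_subset (isClosed_le continuous_const (map_continuous f₀).norm) hKC
  -- find the point x
  have hP : ∃ x ∈ K, ∀ (g : C(Z,ℝ)) (hg : ∀ z, g z ∈ Icc (0:ℝ) 1),
      (∃ U, IsOpen U ∧ x ∈ U ∧ EqOn g 1 U) → μ (rsmul g hg f₀) = 1 := by
    by_contra hcon
    push_neg at hcon
    have hcon' : ∀ (xs : K), ∃ (g : C(Z,ℝ)) (hg : ∀ z, g z ∈ Icc (0:ℝ) 1) (U : Set Z),
        IsOpen U ∧ (xs : Z) ∈ U ∧ EqOn g 1 U ∧ μ (rsmul g hg f₀) ≠ 1 := by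
      intro xs
      obtain ⟨g, hg, hUU, hne⟩ := hcon xs xs.2
      obtain ⟨U, hUo, hUm, hUe⟩ := hUU
      exact ⟨g, hg, U, hUo, hUm, hUe, hne⟩
    choose gf hgf U hUopen hUmem hUeq hne using hcon'
    choose tf htf0 htf1 htf using fun (xs : K) =>
      exists_t hadd hsmul hbd hext (gf xs) (hgf xs)
    have htflt : ∀ xs : K, tf xs < 1 := by
      intro xs
      rcases lt_or_eq_of_le (htf1 xs) with h | h
      · exact h
      · exact absurd (by rw [htf xs f₀, hμf₀, mul_one, h, Complex.ofReal_one]) (hne xs)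
    obtain ⟨s, hs⟩ := hKc.elim_finite_subcover U hUopen
      (fun z hz => mem_iUnion.mpr ⟨⟨z, hz⟩, hUmem ⟨z, hz⟩⟩)
    -- lemma M
    have M : ∀ (s' : Finset K) (F : C₀(Z, ℂ)), ∃ F' : C₀(Z, ℂ),
        (∀ z, F' z = ((∏ i ∈ s', (1 - gf i z) : ℝ) : ℂ) * F z) ∧
        μ F' = ((∏ i ∈ s', (1 - tf i) : ℝ) : ℂ) * μ F := by
      intro s'
      induction s' using Finset.induction_on with
      | empty => intro F; exact ⟨F, by simp, by simp⟩
      | insert a s'' hnotmem ih =>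
        intro F
        obtain ⟨G, hGpt, hGμ⟩ := ih (F - rsmul (gf a) (hgf a) F)
        refine ⟨G, ?_, ?_⟩
        · intro z
          rw [hGpt z]
          have : (F - rsmul (gf a) (hgf a) F) z = ((1 - gf a z : ℝ) : ℂ) * F z := by
            simp only [ZeroAtInftyContinuousMap.coe_sub, Pi.sub_apply, rsmul_apply]
            push_cast; ring
          rw [this, Finset.prod_insert hnotmem]
          push_cast; ring
        · rw [hGμ, mu_sub hadd hsmul, htf a F, Finset.prod_insert hnotmem]
          push_cast; ring
    set r : ℝ := ∏ i ∈ s, (1 - tf i) with hr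
    have hr0 : 0 < r := Finset.prod_pos fun i _ => by linarith [htflt i]
    have hr1 : r ≤ 1 := Finset.prod_le_one (fun i _ => by linarith [htflt i])
      (fun i _ => by linarith [htf0 i])
    -- lemma N
    have N : ∀ n : ℕ, ∃ H : C₀(Z, ℂ),
        (∀ z, H z = (((1 - ∏ i ∈ s, (1 - gf i z))^n : ℝ) : ℂ) * f₀ z) ∧
        μ H = (((1 - r)^n : ℝ) : ℂ) := by
      intro n
      induction n with
      | zero => exact ⟨f₀, by simp, by simp [hμf₀]⟩
      | succ n ih =>
        obtain ⟨H, hHpt, hHμ⟩ := ih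
        obtain ⟨F', hF'pt, hF'μ⟩ := M s H
        refine ⟨H - F', ?_, ?_⟩
        · intro z
          simp only [ZeroAtInftyContinuousMap.coe_sub, Pi.sub_apply]
          rw [hHpt z, hF'pt z, hHpt z]
          push_cast; ring
        · rw [mu_sub hadd hsmul, hHμ, hF'μ, hHμ, ← hr]
          push_cast; ring
    -- contradiction
    have hbound : ∀ n : ℕ, 1/2 ≤ (1 - r)^n := by
      intro n
      obtain ⟨H, hHpt, hHμ⟩ := N n
      have hdiff : ‖f₀ - H‖ ≤ 1/2 := by
        refine norm_le_of_forall (by norm_num) fun z => ?_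
        have e1 : (f₀ - H) z = ((1 - (1 - ∏ i ∈ s, (1 - gf i z))^n : ℝ) : ℂ) * f₀ z := by
          simp only [ZeroAtInftyContinuousMap.coe_sub, Pi.sub_apply]
          rw [hHpt z]
          push_cast; ring
        rw [e1]
        have hprod01 : (∏ i ∈ s, (1 - gf i z)) ∈ Icc (0:ℝ) 1 := by
          constructor
          · exact Finset.prod_nonneg fun i _ => by linarith [(hgf i z).2]
          · exact Finset.prod_le_one (fun i _ => by linarith [(hgf i z).2])
              (fun i _ => by linarith [(hgf i z).1])
        have hw01 : (1 - ∏ i ∈ s, (1 - gf i z))^n ∈ Icc (0:ℝ) 1 := by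
          constructor
          · exact pow_nonneg (by linarith [hprod01.2]) n
          · exact pow_le_one₀ (by linarith [hprod01.2]) (by linarith [hprod01.1])
        by_cases hzK : z ∈ K
        · obtain ⟨i, his, hiU⟩ := mem_iUnion₂.mp (hs hzK)
          have : gf i z = 1 := hUeq i hiU
          have : (∏ j ∈ s, (1 - gf j z)) = 0 :=
            Finset.prod_eq_zero his (by rw [this]; ring)
          rw [this]
          simp
        · have : ‖f₀ z‖ ≤ 1/2 := by
            simp only [hK, mem_setOf_eq, not_le] at hzK
            linarith
          rw [norm_mul, Complex.norm_real, Real.norm_eq_abs]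
          have : |1 - (1 - ∏ i ∈ s, (1 - gf i z))^n| ≤ 1 := by
            rw [abs_le]; constructor <;> [linarith [hw01.2]; linarith [hw01.1]]
          nlinarith [norm_nonneg (f₀ z), abs_nonneg (1 - (1 - ∏ i ∈ s, (1 - gf i z))^n)]
      have := hbd (f₀ - H)
      rw [mu_sub hadd hsmul, hμf₀, hHμ] at this
      have h2 : ‖((1 - (1-r)^n : ℝ) : ℂ)‖ ≤ 1/2 := by
        calc ‖((1 - (1-r)^n : ℝ) : ℂ)‖ = ‖(1:ℂ) - (((1-r)^n : ℝ) : ℂ)‖ := by push_cast; ring_nf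
          _ ≤ 1/2 := le_trans this hdiff
      rw [Complex.norm_real, Real.norm_eq_abs] at h2
      have h3 : 1 - (1-r)^n ≤ |1 - (1-r)^n| := le_abs_self _
      linarith
    have h1r : 1 - r < 1 := by linarith
    have h1r0 : 0 ≤ 1 - r := by linarith
    obtain ⟨n, hn⟩ := exists_pow_lt_of_lt_one (by norm_num : (0:ℝ) < 1/2) h1r
    linarith [hbound n]
  obtain ⟨x, hxK, hxP⟩ := hP
  -- the ∀ f version of the point property
  have hxP' : ∀ (g : C(Z,ℝ)) (hg : ∀ z, g z ∈ Icc (0:ℝ) 1),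
      (∃ U, IsOpen U ∧ x ∈ U ∧ EqOn g 1 U) → ∀ f, μ (rsmul g hg f) = μ f := by
    intro g hg hU f
    obtain ⟨t, _, _, htf⟩ := exists_t hadd hsmul hbd hext g hg
    have h1 : (t : ℂ) = 1 := by
      have := htf f₀
      rw [hxP g hg hU, hμf₀, mul_one] at this
      exact this.symm
    rw [htf f, h1, one_mul]
  -- vanishing
  have hvan : ∀ f : C₀(Z, ℂ), f x = 0 → μ f = 0 := by
    intro f hfx
    rw [← norm_le_zero_iff]
    refine le_of_forall_pos_le_add fun ε hε => ?_
    have hVopen : IsOpen {z | ‖f z‖ < ε} := isOpen_lt (map_continuous f).norm continuous_const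
    have hxV : x ∈ {z | ‖f z‖ < ε} := by simp [hfx, hε]
    obtain ⟨g, hgc, hgi, hgU, hg0⟩ := exists_peak hVopen hxV
    have := hxP' g hgi hgU f
    rw [← this]
    have : ‖rsmul g hgi f‖ ≤ ε := by
      refine norm_le_of_forall hε.le fun z => ?_
      rw [rsmul_apply, norm_mul, Complex.norm_real, Real.norm_eq_abs]
      by_cases hz : ‖f z‖ < ε
      · rw [abs_of_nonneg (hgi z).1]
        nlinarith [(hgi z).1, (hgi z).2, norm_nonneg (f z)]
      · have : g z = 0 := hg0 (by simpa using hz)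
        simp [this, hε.le]
    linarith [hbd (rsmul g hgi f), this]
  -- the peak at x
  obtain ⟨Kx, hKxc, hKxn⟩ := exists_compact_mem_nhds x
  obtain ⟨e, he1, _, hec, hei⟩ := exists_continuous_one_zero_of_isCompact hKxc
    isClosed_empty (disjoint_empty _)
  set eC : C₀(Z, ℂ) := realToC0 e hec with heC
  have heCx : eC x = 1 := by
    rw [heC, realToC0_apply]
    rw [he1 (mem_of_mem_nhds hKxn)]
    simp
  have heCnorm : ‖eC‖ ≤ 1 := by
    refine norm_le_of_forall zero_le_one fun z => ?_
    rw [heC, realToC0_apply, Complex.norm_real, Real.norm_eq_abs, abs_le]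
    exact ⟨by linarith [(hei z).1], (hei z).2⟩
  refine ⟨x, μ eC, ?_, ?_⟩
  · have hle : ‖μ eC‖ ≤ 1 := le_trans (hbd eC) heCnorm
    have hge : 1 ≤ ‖μ eC‖ := by
      have hrepr : μ f₀ = f₀ x * μ eC := by
        have : μ (f₀ - f₀ x • eC) = 0 := by
          apply hvan
          simp only [ZeroAtInftyContinuousMap.coe_sub, Pi.sub_apply,
            ZeroAtInftyContinuousMap.coe_smul, Pi.smul_apply, smul_eq_mul, heCx]
          ring
        rw [mu_sub hadd hsmul, hsmul] at this
        linear_combination this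
      have h1 : (1:ℝ) = ‖f₀ x‖ * ‖μ eC‖ := by
        rw [← norm_mul, ← hrepr, hμf₀, norm_one]
      have h2 : ‖f₀ x‖ ≤ 1 := le_trans (norm_apply_le f₀ x) hf₀
      nlinarith [norm_nonneg (μ eC), norm_nonneg (f₀ x)]
    linarith
  · intro f
    have : μ (f - f x • eC) = 0 := by
      apply hvan
      simp only [ZeroAtInftyContinuousMap.coe_sub, Pi.sub_apply,
        ZeroAtInftyContinuousMap.coe_smul, Pi.smul_apply, smul_eq_mul, heCx]
      ring
    rw [mu_sub hadd hsmul, hsmul] at this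
    linear_combination this

/-- strict convexity of the disk at `1`. -/
lemma disk_eq_one {u v : ℂ} {t : ℝ} (hu : ‖u‖ ≤ 1) (hv : ‖v‖ ≤ 1) (ht0 : 0 < t) (ht1 : t < 1)
    (h : (t : ℂ) * u + ((1 - t : ℝ) : ℂ) * v = 1) : u = 1 := by
  have hre : t * u.re + (1 - t) * v.re = 1 := by
    have := congrArg Complex.re h
    simpa [Complex.add_re, Complex.mul_re, Complex.ofReal_re, Complex.ofReal_im] using this
  have hure : u.re ≤ 1 := le_trans (Complex.re_le_norm u) hu
  have hvre : v.re ≤ 1 := le_trans (Complex.re_le_norm v) hv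
  have hue : u.re = 1 := by nlinarith
  have hsq : u.re ^ 2 + u.im ^ 2 ≤ 1 := by
    have h1 : Complex.normSq u ≤ 1 := by
      have : ‖u‖ ^ 2 ≤ 1 := by nlinarith [norm_nonneg u]
      rwa [← Complex.normSq_eq_norm_sq] at this
    simpa [Complex.normSq_apply, sq] using h1
  have him : u.im = 0 := by nlinarith [sq_nonneg u.im]
  exact Complex.ext (by simp [hue]) (by simp [him])

/-- the evaluation functional at a point is "extreme". -/
lemma delta_ext (y : Z) (α β : C₀(Z, ℂ) → ℂ)
    (hαadd : ∀ f g, α (f + g) = α f + α g) (hαsmul : ∀ (c : ℂ) f, α (c • f) = c * α f)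
    (hαbd : ∀ f, ‖α f‖ ≤ ‖f‖) (hβbd : ∀ f, ‖β f‖ ≤ ‖f‖)
    (t : ℝ) (ht0 : 0 < t) (ht1 : t < 1)
    (hcomb : ∀ f, (f y : ℂ) = (t : ℂ) * α f + ((1 - t : ℝ) : ℂ) * β f) :
    ∀ f, α f = f y := by
  -- the key claim, for a peak g at y
  have claim : ∀ (g : C(Z, ℝ)) (hgc : HasCompactSupport g) (hgi : ∀ z, g z ∈ Icc (0:ℝ) 1)
      (hgy : g y = 1) (f : C₀(Z, ℂ)), ‖f‖ ≤ 1 →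
      α (realToC0 g hgc) = 1 ∧ α (rsmul (1 - g) (fun z => by
        have := hgi z
        simp only [ContinuousMap.sub_apply, ContinuousMap.one_apply, mem_Icc] at this ⊢
        constructor <;> linarith [this.1, this.2]) f) = 0 := by
    intro g hgc hgi hgy f hf
    set hgi' : ∀ z, (1 - g : C(Z, ℝ)) z ∈ Icc (0:ℝ) 1 := fun z => by
      have := hgi z
      simp only [ContinuousMap.sub_apply, ContinuousMap.one_apply, mem_Icc] at this ⊢
      constructor <;> linarith [this.1, this.2]
    set gC : C₀(Z, ℂ) := realToC0 g hgc with hgC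
    set q : C₀(Z, ℂ) := rsmul (1 - g) hgi' f with hq
    have hnorm : ∀ (c : ℂ), ‖c‖ = 1 → ‖gC + c • q‖ ≤ 1 := by
      intro c hc
      refine norm_le_of_forall zero_le_one fun z => ?_
      have e1 : (gC + c • q) z = (g z : ℂ) + c * (((1 - g : C(Z,ℝ)) z : ℝ) : ℂ) * f z := by
        simp only [hgC, hq, ZeroAtInftyContinuousMap.coe_add, Pi.add_apply, realToC0_apply,
          ZeroAtInftyContinuousMap.coe_smul, Pi.smul_apply, smul_eq_mul, rsmul_apply]
        ring
      rw [e1]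
      have hz := hgi z
      have hfz : ‖f z‖ ≤ 1 := le_trans (norm_apply_le f z) hf
      calc ‖(g z : ℂ) + c * (((1 - g : C(Z,ℝ)) z : ℝ) : ℂ) * f z‖
          ≤ ‖(g z : ℂ)‖ + ‖c * (((1 - g : C(Z,ℝ)) z : ℝ) : ℂ) * f z‖ := norm_add_le _ _
        _ ≤ g z + (1 - g z) := by
            apply add_le_add
            · rw [Complex.norm_real, Real.norm_eq_abs, abs_of_nonneg hz.1]
            · rw [norm_mul, norm_mul, hc, one_mul, Complex.norm_real, Real.norm_eq_abs]
              have : |(1 - g : C(Z,ℝ)) z| = 1 - g z := by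
                rw [abs_of_nonneg (hgi' z).1]
                simp [ContinuousMap.sub_apply]
              rw [this]
              nlinarith [hz.2]
        _ = 1 := by ring
    have heval : ∀ (c : ℂ), ((gC + c • q) y : ℂ) = 1 := by
      intro c
      simp only [hgC, hq, ZeroAtInftyContinuousMap.coe_add, Pi.add_apply, realToC0_apply,
        ZeroAtInftyContinuousMap.coe_smul, Pi.smul_apply, smul_eq_mul, rsmul_apply,
        ContinuousMap.sub_apply, ContinuousMap.one_apply, hgy]
      push_cast
      ring
    have key : ∀ (c : ℂ), ‖c‖ = 1 → α (gC + c • q) = 1 := by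
      intro c hc
      have h1 := hcomb (gC + c • q)
      rw [heval c] at h1
      exact disk_eq_one (le_trans (hαbd _) (hnorm c hc)) (le_trans (hβbd _) (hnorm c hc))
        ht0 ht1 h1.symm
    have k1 := key 1 (by simp)
    have k2 := key (-1) (by simp)
    rw [hαadd, hαsmul] at k1 k2
    constructor
    · linear_combination (k1 + k2) / 2
    · linear_combination (k1 - k2) / 2
  -- vanishing at y implies α vanishes
  have hvan : ∀ f : C₀(Z, ℂ), f y = 0 → α f = 0 := by
    intro f hfy
    rw [← norm_le_zero_iff]
    refine le_of_forall_pos_le_add fun ε hε => ?_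
    have hVopen : IsOpen {z | ‖f z‖ < ε} := isOpen_lt (map_continuous f).norm continuous_const
    have hyV : y ∈ {z | ‖f z‖ < ε} := by simp [hfy, hε]
    obtain ⟨g, hgc, hgi, ⟨U, hUo, hUm, hUe⟩, hg0⟩ := exists_peak hVopen hyV
    have hgy : g y = 1 := hUe hUm
    have hgi' : ∀ z, (1 - g : C(Z,ℝ)) z ∈ Icc (0:ℝ) 1 := fun z => by
      have := hgi z
      simp only [ContinuousMap.sub_apply, ContinuousMap.one_apply, mem_Icc] at this ⊢
      constructor <;> linarith [this.1, this.2]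
    have hq0 : α (rsmul (1 - g) hgi' f) = 0 := by
      rcases eq_or_ne f 0 with rfl | hf0
      · have : rsmul (1 - g) hgi' (0 : C₀(Z, ℂ)) = 0 := by
          ext z; simp
        rw [this]
        have := hαsmul 0 0
        simpa using this
      · have hfn : (0:ℝ) < ‖f‖ := norm_pos_iff.mpr hf0
        set f' : C₀(Z, ℂ) := ((‖f‖⁻¹ : ℝ) : ℂ) • f with hf'
        have hf'1 : ‖f'‖ ≤ 1 := by
          rw [hf', norm_csmul, Complex.norm_real, Real.norm_eq_abs,
            abs_of_nonneg (by positivity), inv_mul_cancel₀ hfn.ne']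
        have h2 : α (rsmul (1 - g) hgi' f') = 0 := (claim g hgc hgi hgy f' hf'1).2
        have e1 : rsmul (1 - g) hgi' f' = ((‖f‖⁻¹ : ℝ) : ℂ) • rsmul (1 - g) hgi' f := by
          ext z
          simp only [rsmul_apply, hf', ZeroAtInftyContinuousMap.coe_smul, Pi.smul_apply,
            smul_eq_mul]
          ring
        rw [e1, hαsmul] at h2
        have hne : ((‖f‖⁻¹ : ℝ) : ℂ) ≠ 0 :=
          Complex.ofReal_ne_zero.mpr (by positivity)
        exact (mul_eq_zero.mp h2).resolve_left hne
    -- decompose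
    have hdec : α f = α (rsmul g hgi f) + α (rsmul (1 - g) hgi' f) := by
      rw [← hαadd]
      congr 1
      ext z
      simp only [rsmul_apply, ZeroAtInftyContinuousMap.coe_add, Pi.add_apply,
        ContinuousMap.sub_apply, ContinuousMap.one_apply]
      push_cast
      ring
    rw [hdec, hq0, add_zero]
    have hsmall : ‖rsmul g hgi f‖ ≤ ε := by
      refine norm_le_of_forall hε.le fun z => ?_
      rw [rsmul_apply, norm_mul, Complex.norm_real, Real.norm_eq_abs,
        abs_of_nonneg (hgi z).1]
      by_cases hz : ‖f z‖ < ε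
      · nlinarith [(hgi z).1, (hgi z).2, norm_nonneg (f z)]
      · have : g z = 0 := hg0 (by simpa using hz)
        simp [this, hε.le]
    linarith [hαbd (rsmul g hgi f), hsmall]
  -- conclude
  intro f
  obtain ⟨Ky, hKyc, hKyn⟩ := exists_compact_mem_nhds y
  obtain ⟨e, he1, _, hec, hei⟩ := exists_continuous_one_zero_of_isCompact hKyc
    isClosed_empty (disjoint_empty _)
  have hey : e y = 1 := he1 (mem_of_mem_nhds hKyn)
  have heα : α (realToC0 e hec) = 1 :=
    (claim e hec hei hey 0 (by simp)).1
  have hα0 : α (f - f y • realToC0 e hec) = 0 := by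
    apply hvan
    simp only [ZeroAtInftyContinuousMap.coe_sub, Pi.sub_apply,
      ZeroAtInftyContinuousMap.coe_smul, Pi.smul_apply, smul_eq_mul, realToC0_apply, hey]
    push_cast
    ring
  have hsub : ∀ f g, α (f - g) = α f - α g := by
    intro f g
    have h1 : α (f - g) + α g = α f := by rw [← hαadd]; norm_num
    linear_combination h1
  rw [hsub, hαsmul, heα, mul_one] at hα0
  linear_combination hα0

/-- a `C₀` peak function at a point, supported in a given open set. -/
lemma exists_c0_peak {z : Z} {V : Set Z} (hV : IsOpen V) (hz : z ∈ V) :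
    ∃ f : C₀(Z, ℂ), ‖f‖ ≤ 1 ∧ f z = 1 ∧ ∀ w ∈ Vᶜ, f w = 0 := by
  obtain ⟨g, hgc, hgi, ⟨U, hUo, hUm, hUe⟩, hg0⟩ := exists_peak hV hz
  refine ⟨realToC0 g hgc, ?_, ?_, ?_⟩
  · refine norm_le_of_forall zero_le_one fun w => ?_
    rw [realToC0_apply, Complex.norm_real, Real.norm_eq_abs, abs_le]
    exact ⟨by linarith [(hgi w).1], (hgi w).2⟩
  · rw [realToC0_apply, hUe hUm]; simp
  · intro w hw
    rw [realToC0_apply, hg0 hw]; simp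

end ExtFunc

variable {W : Type*} [TopologicalSpace W] [LocallyCompactSpace W] [T2Space W]

/-- pointwise representation of a surjective linear isometry between `C₀` spaces. -/
lemma equiv_repr (E : C₀(Z, ℂ) ≃ₗᵢ[ℂ] C₀(W, ℂ)) (w : W) :
    ∃ (x : Z) (lam : ℂ), ‖lam‖ = 1 ∧ ∀ f, E f w = lam * f x := by
  set μ : C₀(Z, ℂ) → ℂ := fun f => E f w with hμ
  have hadd : ∀ f g, μ (f + g) = μ f + μ g := by
    intro f g; simp only [hμ, map_add]; rfl
  have hsmul : ∀ (c : ℂ) f, μ (c • f) = c * μ f := by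
    intro c f; simp only [hμ, map_smul]; rfl
  have hbd : ∀ f, ‖μ f‖ ≤ ‖f‖ := by
    intro f
    calc ‖E f w‖ ≤ ‖E f‖ := norm_apply_le _ _
      _ = ‖f‖ := E.norm_map f
  have hext : ExtProp μ := by
    intro α β hαadd hαsmul hαbd hβbd t ht0 ht1 hcomb
    have key := delta_ext w (fun p => α (E.symm p)) (fun p => β (E.symm p))
      (fun p q => by
        show α (E.symm (p + q)) = α (E.symm p) + α (E.symm q)
        rw [map_add]; exact hαadd _ _)
      (fun c p => by
        show α (E.symm (c • p)) = c * α (E.symm p)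
        rw [map_smul]; exact hαsmul _ _)
      (fun p => le_trans (hαbd _) (by rw [E.symm.norm_map]))
      (fun p => le_trans (hβbd _) (by rw [E.symm.norm_map]))
      t ht0 ht1
      (fun p => by
        have h1 := hcomb (E.symm p)
        have h2 : μ (E.symm p) = p w := by rw [hμ]; simp only [E.apply_symm_apply]
        rw [h2] at h1
        show (p w : ℂ) = _
        push_cast
        linear_combination h1)
    intro f
    have := key (E f)
    simp only [E.symm_apply_apply] at this
    exact this
  have hex : ∃ f₀ : C₀(Z, ℂ), ‖f₀‖ ≤ 1 ∧ μ f₀ = 1 := by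
    obtain ⟨p, hp1, hpw, _⟩ := exists_c0_peak (isOpen_univ : IsOpen (univ : Set W)) (mem_univ w)
    refine ⟨E.symm p, ?_, ?_⟩
    · rw [E.symm.norm_map]; exact hp1
    · rw [hμ]; simp only [E.apply_symm_apply]; exact hpw
  exact exists_point_repr hadd hsmul hbd hext hex

end BSAux

open BSAux in
/-- Banach–Stone theorem: every surjective linear isometry between `C₀(X, ℂ)` and `C₀(Y, ℂ)`
is a weighted composition operator with unimodular continuous weight and a homeomorphism. -/
theorem banach_stone_C0_complex {X Y : Type*}
    [TopologicalSpace X] [LocallyCompactSpace X] [T2Space X]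
    [TopologicalSpace Y] [LocallyCompactSpace Y] [T2Space Y]
    (T : C₀(X, ℂ) →ₗᵢ[ℂ] C₀(Y, ℂ)) (hT : Function.Surjective T) :
    ∃ (φ : Y ≃ₜ X) (h : C(Y, ℂ)), (∀ y : Y, ‖h y‖ = 1) ∧
      ∀ (f : C₀(X, ℂ)) (y : Y), T f y = h y * f (φ y) := by
  classical
  set E : C₀(X, ℂ) ≃ₗᵢ[ℂ] C₀(Y, ℂ) := LinearIsometryEquiv.ofSurjective T hT with hE
  have hEcoe : ∀ f, E f = T f := fun f => by
    rw [hE, LinearIsometryEquiv.coe_ofSurjective]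
  rcases isEmpty_or_nonempty Y with hY | hY
  · -- degenerate case
    have hX : IsEmpty X := by
      by_contra hX
      rw [not_isEmpty_iff] at hX
      obtain ⟨x⟩ := hX
      obtain ⟨f, _, hfx, _⟩ := exists_c0_peak (isOpen_univ : IsOpen (univ : Set X)) (mem_univ x)
      have hTf : T f = 0 := by ext y; exact isEmptyElim y
      have : ‖f‖ = 0 := by rw [← T.norm_map f, hTf, norm_zero]
      rw [norm_eq_zero] at this
      rw [this] at hfx
      simpa using hfx
    refine ⟨⟨⟨fun y => isEmptyElim y, fun x => isEmptyElim x,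
        fun y => isEmptyElim y, fun x => isEmptyElim x⟩,
        continuous_iff_continuousAt.mpr fun y => isEmptyElim y,
        continuous_iff_continuousAt.mpr fun x => isEmptyElim x⟩,
      ContinuousMap.const Y 1, fun y => isEmptyElim y, fun f y => isEmptyElim y⟩
  · -- main case
    choose φ0 h0 hn hrep using fun y : Y => equiv_repr E y
    choose ψ0 k0 hkn hkrep using fun x : X => equiv_repr E.symm x
    -- inverse identities
    have hψφ : ∀ y, ψ0 (φ0 y) = y := by
      intro y
      by_contra hne
      have hopen : IsOpen ({ψ0 (φ0 y)}ᶜ : Set Y) := isClosed_singleton.isOpen_compl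
      have hmem : y ∈ ({ψ0 (φ0 y)}ᶜ : Set Y) := by simpa using Ne.symm hne
      obtain ⟨p, _, hpy, hp0⟩ := exists_c0_peak hopen hmem
      have e1 : p y = h0 y * (E.symm p) (φ0 y) := by
        conv_lhs => rw [← E.apply_symm_apply p]
        exact hrep y (E.symm p)
      rw [hkrep (φ0 y) p] at e1
      have e2 : p (ψ0 (φ0 y)) = 0 := hp0 _ (by simp)
      rw [e2, mul_zero, mul_zero] at e1
      rw [hpy] at e1
      exact one_ne_zero e1
    have hφψ : ∀ x, φ0 (ψ0 x) = x := by
      intro x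
      by_contra hne
      have hopen : IsOpen ({φ0 (ψ0 x)}ᶜ : Set X) := isClosed_singleton.isOpen_compl
      have hmem : x ∈ ({φ0 (ψ0 x)}ᶜ : Set X) := by simpa using Ne.symm hne
      obtain ⟨f, _, hfx, hf0⟩ := exists_c0_peak hopen hmem
      have e1 : f x = k0 x * (E f) (ψ0 x) := by
        conv_lhs => rw [← E.symm_apply_apply f]
        exact hkrep x (E f)
      rw [hrep (ψ0 x) f] at e1
      have e2 : f (φ0 (ψ0 x)) = 0 := hf0 _ (by simp)
      rw [e2, mul_zero, mul_zero] at e1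
      rw [hfx] at e1
      exact one_ne_zero e1
    -- continuity of φ0
    have hφcont : Continuous φ0 := by
      rw [continuous_iff_continuousAt]
      intro y
      rw [ContinuousAt, Filter.tendsto_def]
      intro U hU
      obtain ⟨V, hVU, hVo, hVm⟩ := mem_nhds_iff.mp hU
      obtain ⟨f, _, hfx, hf0⟩ := exists_c0_peak hVo hVm
      have hWo : IsOpen {y' | 1/2 < ‖E f y'‖} :=
        isOpen_lt continuous_const (map_continuous (E f)).norm
      have hWy : y ∈ {y' | 1/2 < ‖E f y'‖} := by
        simp only [mem_setOf_eq, hrep y f, hfx, mul_one, norm_mul, hn y]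
        norm_num [hn y]
      refine mem_of_superset (hWo.mem_nhds hWy) ?_
      intro y' hy'
      simp only [mem_setOf_eq, hrep y' f, norm_mul, hn y', one_mul] at hy'
      have : f (φ0 y') ≠ 0 := by
        intro h0'
        rw [h0'] at hy'
        norm_num at hy'
      by_contra hc
      exact this (hf0 _ fun hmem' => hc (hVU hmem'))
    -- continuity of ψ0
    have hψcont : Continuous ψ0 := by
      rw [continuous_iff_continuousAt]
      intro x
      rw [ContinuousAt, Filter.tendsto_def]
      intro U hU
      obtain ⟨V, hVU, hVo, hVm⟩ := mem_nhds_iff.mp hU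
      obtain ⟨p, _, hpy, hp0⟩ := exists_c0_peak hVo hVm
      have hWo : IsOpen {x' | 1/2 < ‖E.symm p x'‖} :=
        isOpen_lt continuous_const (map_continuous (E.symm p)).norm
      have hWx : x ∈ {x' | 1/2 < ‖E.symm p x'‖} := by
        simp only [mem_setOf_eq, hkrep x p, hpy, mul_one, norm_mul, hkn x]
        norm_num [hkn x]
      refine mem_of_superset (hWo.mem_nhds hWx) ?_
      intro x' hx'
      simp only [mem_setOf_eq, hkrep x' p, norm_mul, hkn x', one_mul] at hx'
      have : p (ψ0 x') ≠ 0 := by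
        intro h0'
        rw [h0'] at hx'
        norm_num at hx'
      by_contra hc
      exact this (hp0 _ fun hmem' => hc (hVU hmem'))
    -- continuity of h0
    have hhcont : Continuous h0 := by
      rw [continuous_iff_continuousAt]
      intro y₀
      obtain ⟨Kx, hKxc, hKxn⟩ := exists_compact_mem_nhds (φ0 y₀)
      obtain ⟨e', he1, _, hec, hei⟩ := exists_continuous_one_zero_of_isCompact hKxc
        isClosed_empty (disjoint_empty _)
      set f : C₀(X, ℂ) := realToC0 e' hec with hf
      have hVo : IsOpen (φ0 ⁻¹' interior Kx) := isOpen_interior.preimage hφcont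
      have hVm : y₀ ∈ φ0 ⁻¹' interior Kx := mem_interior_iff_mem_nhds.mpr hKxn
      refine ContinuousAt.congr (map_continuous (E f)).continuousAt ?_
      refine Filter.eventuallyEq_of_mem (hVo.mem_nhds hVm) fun y hy => ?_
      have : f (φ0 y) = 1 := by
        rw [hf, realToC0_apply, he1 (interior_subset hy)]
        simp
      rw [hrep y f, this, mul_one]
    refine ⟨⟨⟨φ0, ψ0, hψφ, hφψ⟩, hφcont, hψcont⟩, ⟨h0, hhcont⟩, fun y => hn y, fun f y => ?_⟩
    rw [← hEcoe f]
    exact hrep y f
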